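/- arXiv:1009.1723 — 4 statements merged into one kernel-verified Lean document; each statement's English description precedes it below -/
import Mathlib

section
/- Let r > 0, {v₀,v₁,w} a positive oriented orthonormal system, α(t) = √(1+r²) w + r cos(2πt) v₁ + r sin(2πt) v₀, and W₁(t) = α̇(t), W₂(t) = √(1+r²) v₁ + r cos(2πt) w, W₃(t) = √(1+r²) v₀ + r sin(2πt) w. Then for all t: (−D_t²+1)(W₁)(t) = (4π²(1+r²)+1) α̇(t); (−D_t²+1)(−2πr W₂)(t) = √(1+r²)(4π²r²+1) sin(2πt) α̇(t) + (1 − 4π²r²) cos(2πt) (α(t) ×ₘ α̇(t)); and (−D_t²+1)(−2πr W₃)(t) = −√(1+r²)(4π²r²+1) cos(2πt) α̇(t) + (1 − 4π²r²) sin(2πt) (α(t) ×ₘ α̇(t)). -/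
noncomputable section

open Real

/-- The Minkowski inner product on ℝ³. -/
def mink (v w : Fin 3 → ℝ) : ℝ := v 0 * w 0 + v 1 * w 1 - v 2 * w 2

/-- The twisted cross product on ℝ³. -/
def mcross (v w : Fin 3 → ℝ) : Fin 3 → ℝ :=
  ![v 2 * w 1 - v 1 * w 2, v 0 * w 2 - v 2 * w 0, v 0 * w 1 - v 1 * w 0]

/-- A positive oriented orthonormal system with respect to the Minkowski metric. -/
def posOrth (v₀ v₁ w : Fin 3 → ℝ) : Prop :=
  mink v₀ v₁ = 0 ∧ mink v₀ w = 0 ∧ mink v₁ w = 0 ∧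
  mink v₀ v₀ = 1 ∧ mink v₁ v₁ = 1 ∧ mink w w = -1 ∧
  mcross v₀ v₁ = w

/-- Membership in the hyperbolic plane ℍ ⊂ ℝ³. -/
def inH (x : Fin 3 → ℝ) : Prop := x 2 ^ 2 - x 0 ^ 2 - x 1 ^ 2 = 1 ∧ 0 < x 2

/-- The covariant derivative on ℍ of a tangent vector field `V` along a curve `γ` in ℍ:
`D_t V(t) = V̇(t) + ⟨V̇(t), γ(t)⟩ₘ γ(t)`. -/
def covDt (γ V : ℝ → Fin 3 → ℝ) : ℝ → Fin 3 → ℝ :=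
  fun t => deriv V t + mink (deriv V t) (γ t) • γ t

/- ### Auxiliary lemmas -/

lemma mink_comm' (x y : Fin 3 → ℝ) : mink x y = mink y x := by unfold mink; ring

lemma mink_cmb {v₀ v₁ w : Fin 3 → ℝ} (hsys : posOrth v₀ v₁ w) (a b c a' b' c' : ℝ) :
    mink (a • w + b • v₁ + c • v₀) (a' • w + b' • v₁ + c' • v₀) = b * b' + c * c' - a * a' := by
  obtain ⟨h1, h2, h3, h4, h5, h6, h7⟩ := hsys
  simp only [mink, Pi.add_apply, Pi.smul_apply, smul_eq_mul] at h1 h2 h3 h4 h5 h6 ⊢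
  linear_combination (b*c' + c*b') * h1 + (a*c' + c*a') * h2 + (a*b' + b*a') * h3 +
    (c*c') * h4 + (b*b') * h5 + (a*a') * h6

lemma mcross_add_left' (x y z : Fin 3 → ℝ) : mcross (x + y) z = mcross x z + mcross y z := by
  funext i; fin_cases i <;> simp [mcross] <;> ring
lemma mcross_add_right' (x y z : Fin 3 → ℝ) : mcross x (y + z) = mcross x y + mcross x z := by
  funext i; fin_cases i <;> simp [mcross] <;> ring
lemma mcross_smul_left' (a : ℝ) (x z : Fin 3 → ℝ) : mcross (a • x) z = a • mcross x z := by
  funext i; fin_cases i <;> simp [mcross] <;> ring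
lemma mcross_smul_right' (a : ℝ) (x z : Fin 3 → ℝ) : mcross x (a • z) = a • mcross x z := by
  funext i; fin_cases i <;> simp [mcross] <;> ring
lemma mcross_self' (x : Fin 3 → ℝ) : mcross x x = 0 := by
  funext i; fin_cases i <;> simp [mcross] <;> ring
lemma mcross_anti' (x y : Fin 3 → ℝ) : mcross x y = -mcross y x := by
  funext i; fin_cases i <;> simp [mcross] <;> ring
lemma mcross_triple' (a b c : Fin 3 → ℝ) :
    mcross (mcross a b) c = mink b c • a - mink a c • b := by
  funext i; fin_cases i <;> simp [mcross, mink] <;> ring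

lemma mcross_cmb {v₀ v₁ w : Fin 3 → ℝ} (hsys : posOrth v₀ v₁ w) (a b c a' b' c' : ℝ) :
    mcross (a • w + b • v₁ + c • v₀) (a' • w + b' • v₁ + c' • v₀) =
      (c*b' - b*c') • w + (a'*c - a*c') • v₁ + (a*b' - a'*b) • v₀ := by
  obtain ⟨h1, h2, h3, h4, h5, h6, h7⟩ := hsys
  have h1' : mink v₁ v₀ = 0 := by rw [mink_comm']; exact h1
  have e1 : mcross v₁ v₀ = -w := by rw [mcross_anti', h7]
  have e2 : mcross w v₁ = v₀ := by
    rw [← h7, mcross_triple', h5, h1, one_smul, zero_smul, sub_zero]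
  have e3 : mcross v₁ w = -v₀ := by rw [mcross_anti', e2]
  have e4 : mcross w v₀ = -v₁ := by
    rw [← h7, mcross_triple', h1', h4, one_smul, zero_smul, zero_sub]
  have e5 : mcross v₀ w = v₁ := by rw [mcross_anti', e4, neg_neg]
  simp only [mcross_add_left', mcross_add_right', mcross_smul_left', mcross_smul_right',
    h7, e1, e2, e3, e4, e5, mcross_self', smul_zero, smul_neg]
  module

lemma hd2pi (u : ℝ) : HasDerivAt (fun x : ℝ => 2*π*x) (2*π) u := by
  simpa using (hasDerivAt_id u).const_mul (2*π)
lemma hdkcos (k u : ℝ) : HasDerivAt (fun x : ℝ => k * Real.cos (2*π*x))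
    ((-(k*(2*π))) * Real.sin (2*π*u)) u := by
  have h := ((hd2pi u).cos).const_mul k
  exact h.congr_deriv (by ring)
lemma hdksin (k u : ℝ) : HasDerivAt (fun x : ℝ => k * Real.sin (2*π*x))
    ((k*(2*π)) * Real.cos (2*π*u)) u := by
  have h := ((hd2pi u).sin).const_mul k
  exact h.congr_deriv (by ring)
lemma hdksc (k u : ℝ) : HasDerivAt (fun x : ℝ => k * (Real.sin (2*π*x) * Real.cos (2*π*x)))
    ((k*(2*π)) * (Real.cos (2*π*u)^2 - Real.sin (2*π*u)^2)) u := by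
  have h := (((hd2pi u).sin).mul ((hd2pi u).cos)).const_mul k
  exact h.congr_deriv (by ring)
lemma hdks2 (k u : ℝ) : HasDerivAt (fun x : ℝ => k * Real.sin (2*π*x)^2)
    ((k*(2*π)) * (2*(Real.sin (2*π*u) * Real.cos (2*π*u)))) u := by
  have h := (((hd2pi u).sin).pow 2).const_mul k
  exact h.congr_deriv (by ring)
lemma hdkc2 (k u : ℝ) : HasDerivAt (fun x : ℝ => k * Real.cos (2*π*x)^2)
    ((-(k*(2*π))) * (2*(Real.sin (2*π*u) * Real.cos (2*π*u)))) u := by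
  have h := (((hd2pi u).cos).pow 2).const_mul k
  exact h.congr_deriv (by ring)

lemma deriv_cmb {w v₁ v₀ : Fin 3 → ℝ} {f g h f' g' h' : ℝ → ℝ}
    (hf : ∀ u, HasDerivAt f (f' u) u) (hg : ∀ u, HasDerivAt g (g' u) u)
    (hh : ∀ u, HasDerivAt h (h' u) u) :
    deriv (fun u => f u • w + g u • v₁ + h u • v₀) = fun u => f' u • w + g' u • v₁ + h' u • v₀ :=
  funext fun u =>
    ((((hf u).smul_const w).add ((hg u).smul_const v₁)).add ((hh u).smul_const v₀)).deriv

lemma covDt_cmb {v₀ v₁ w : Fin 3 → ℝ} (hsys : posOrth v₀ v₁ w) {F G H f g h f' g' h' : ℝ → ℝ}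
    (hd : deriv (fun u => f u • w + g u • v₁ + h u • v₀)
      = fun u => f' u • w + g' u • v₁ + h' u • v₀) :
    covDt (fun u => F u • w + G u • v₁ + H u • v₀) (fun u => f u • w + g u • v₁ + h u • v₀)
    = fun u => (f' u + (g' u * G u + h' u * H u - f' u * F u) * F u) • w
       + (g' u + (g' u * G u + h' u * H u - f' u * F u) * G u) • v₁
       + (h' u + (g' u * G u + h' u * H u - f' u * F u) * H u) • v₀ := by
  funext u
  simp only [covDt, hd]
  rw [mink_cmb hsys]
  module

/-- the action of (−D_t² + 1) on W₁, −2πr W₂ and −2πr W₃. -/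
theorem stmt_15 (r : ℝ) (hr : 0 < r) (v₀ v₁ w : Fin 3 → ℝ) (hsys : posOrth v₀ v₁ w) :
    let α : ℝ → Fin 3 → ℝ := fun t =>
      Real.sqrt (1 + r ^ 2) • w + (r * Real.cos (2 * Real.pi * t)) • v₁ +
        (r * Real.sin (2 * Real.pi * t)) • v₀
    let W₁ : ℝ → Fin 3 → ℝ := fun t => deriv α t
    let W₂ : ℝ → Fin 3 → ℝ := fun t =>
      Real.sqrt (1 + r ^ 2) • v₁ + (r * Real.cos (2 * Real.pi * t)) • w
    let W₃ : ℝ → Fin 3 → ℝ := fun t =>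
      Real.sqrt (1 + r ^ 2) • v₀ + (r * Real.sin (2 * Real.pi * t)) • w
    ∀ t : ℝ,
      -(covDt α (covDt α W₁) t) + W₁ t =
        (4 * Real.pi ^ 2 * (1 + r ^ 2) + 1) • deriv α t ∧
      -(covDt α (covDt α (fun s => (-(2 * Real.pi * r)) • W₂ s)) t) +
          (-(2 * Real.pi * r)) • W₂ t =
        (Real.sqrt (1 + r ^ 2) * (4 * Real.pi ^ 2 * r ^ 2 + 1) * Real.sin (2 * Real.pi * t)) •
            deriv α t +
          ((1 - 4 * Real.pi ^ 2 * r ^ 2) * Real.cos (2 * Real.pi * t)) •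
            mcross (α t) (deriv α t) ∧
      -(covDt α (covDt α (fun s => (-(2 * Real.pi * r)) • W₃ s)) t) +
          (-(2 * Real.pi * r)) • W₃ t =
        (-(Real.sqrt (1 + r ^ 2) * (4 * Real.pi ^ 2 * r ^ 2 + 1) * Real.cos (2 * Real.pi * t))) •
            deriv α t +
          ((1 - 4 * Real.pi ^ 2 * r ^ 2) * Real.sin (2 * Real.pi * t)) •
            mcross (α t) (deriv α t) := by
  intro α W₁ W₂ W₃
  have hsq : Real.sqrt (1 + r ^ 2) ^ 2 = 1 + r ^ 2 := Real.sq_sqrt (by positivity)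
  have hP : ∀ x : ℝ, Real.sin x ^ 2 + Real.cos x ^ 2 = 1 := fun x => Real.sin_sq_add_cos_sq x
  -- derivative of α
  have hdA : deriv (fun u : ℝ => Real.sqrt (1 + r ^ 2) • w + (r * Real.cos (2 * Real.pi * u)) • v₁ +
        (r * Real.sin (2 * Real.pi * u)) • v₀)
      = fun u => (0:ℝ) • w + ((-(r*(2*π))) * Real.sin (2*π*u)) • v₁
          + ((r*(2*π)) * Real.cos (2*π*u)) • v₀ :=
    deriv_cmb (fun u => hasDerivAt_const u _) (fun u => hdkcos r u) (fun u => hdksin r u)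
  have hW1 : W₁ = fun u => (0:ℝ) • w + ((-(r*(2*π))) * Real.sin (2*π*u)) • v₁
      + ((r*(2*π)) * Real.cos (2*π*u)) • v₀ := by
    funext u; simp only [W₁, α, hdA]
  -- second derivative data for statement 1
  have hdA1 : deriv (fun u : ℝ => (0:ℝ) • w + ((-(r*(2*π))) * Real.sin (2*π*u)) • v₁
        + ((r*(2*π)) * Real.cos (2*π*u)) • v₀)
      = fun u => (0:ℝ) • w + (((-(r*(2*π)))*(2*π)) * Real.cos (2*π*u)) • v₁
          + ((-((r*(2*π))*(2*π))) * Real.sin (2*π*u)) • v₀ :=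
    deriv_cmb (fun u => hasDerivAt_const u _) (fun u => hdksin (-(r*(2*π))) u)
      (fun u => hdkcos (r*(2*π)) u)
  have hc1 : covDt α (fun u => (0:ℝ) • w + ((-(r*(2*π))) * Real.sin (2*π*u)) • v₁
        + ((r*(2*π)) * Real.cos (2*π*u)) • v₀)
      = fun u => (-(4*π^2*r^2*Real.sqrt (1 + r ^ 2))) • w
          + ((-(4*π^2*(r+r^3))) * Real.cos (2*π*u)) • v₁
          + ((-(4*π^2*(r+r^3))) * Real.sin (2*π*u)) • v₀ := by
    simp only [α]
    refine (covDt_cmb hsys hdA1).trans ?_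
    funext u
    match_scalars
    · linear_combination (-(4*π^2*r^2*Real.sqrt (1 + r ^ 2))) * hP (2*π*u)
    · linear_combination (-(4*π^2*r^3*Real.cos (2*π*u))) * hP (2*π*u)
    · linear_combination (-(4*π^2*r^3*Real.sin (2*π*u))) * hP (2*π*u)
  have hdB1 : deriv (fun u : ℝ => (-(4*π^2*r^2*Real.sqrt (1 + r ^ 2))) • w
        + ((-(4*π^2*(r+r^3))) * Real.cos (2*π*u)) • v₁
        + ((-(4*π^2*(r+r^3))) * Real.sin (2*π*u)) • v₀)
      = fun u => (0:ℝ) • w + ((-((-(4*π^2*(r+r^3)))*(2*π))) * Real.sin (2*π*u)) • v₁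
          + (((-(4*π^2*(r+r^3)))*(2*π)) * Real.cos (2*π*u)) • v₀ :=
    deriv_cmb (fun u => hasDerivAt_const u _) (fun u => hdkcos (-(4*π^2*(r+r^3))) u)
      (fun u => hdksin (-(4*π^2*(r+r^3))) u)
  have hc2 : covDt α (fun u => (-(4*π^2*r^2*Real.sqrt (1 + r ^ 2))) • w
        + ((-(4*π^2*(r+r^3))) * Real.cos (2*π*u)) • v₁
        + ((-(4*π^2*(r+r^3))) * Real.sin (2*π*u)) • v₀)
      = fun u => (0:ℝ) • w + ((-((-(4*π^2*(r+r^3)))*(2*π))) * Real.sin (2*π*u)) • v₁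
          + (((-(4*π^2*(r+r^3)))*(2*π)) * Real.cos (2*π*u)) • v₀ := by
    simp only [α]
    refine (covDt_cmb hsys hdB1).trans ?_
    funext u
    match_scalars <;> ring
  intro t
  refine ⟨?_, ?_, ?_⟩
  · simp only [hW1, hc1, hc2, α, hdA]
    match_scalars <;> ring
  · have hV2 : (fun s : ℝ => (-(2 * Real.pi * r)) • W₂ s)
        = fun u => ((-(2*π*r^2)) * Real.cos (2*π*u)) • w
            + (-(2*π*r*Real.sqrt (1 + r ^ 2))) • v₁ + (0:ℝ) • v₀ := by
      funext u; simp only [W₂]; module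
    have hdV2 : deriv (fun u : ℝ => ((-(2*π*r^2)) * Real.cos (2*π*u)) • w
          + (-(2*π*r*Real.sqrt (1 + r ^ 2))) • v₁ + (0:ℝ) • v₀)
        = fun u => ((-((-(2*π*r^2))*(2*π))) * Real.sin (2*π*u)) • w
            + (0:ℝ) • v₁ + (0:ℝ) • v₀ :=
      deriv_cmb (fun u => hdkcos (-(2*π*r^2)) u) (fun u => hasDerivAt_const u _)
        (fun u => hasDerivAt_const u _)
    have hc3 : covDt α (fun u => ((-(2*π*r^2)) * Real.cos (2*π*u)) • w
          + (-(2*π*r*Real.sqrt (1 + r ^ 2))) • v₁ + (0:ℝ) • v₀)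
        = fun u => ((-(4*π^2*r^4)) * Real.sin (2*π*u)) • w
            + ((-(4*π^2*r^3*Real.sqrt (1 + r ^ 2))) * (Real.sin (2*π*u) * Real.cos (2*π*u))) • v₁
            + ((-(4*π^2*r^3*Real.sqrt (1 + r ^ 2))) * Real.sin (2*π*u)^2) • v₀ := by
      simp only [α]
      refine (covDt_cmb hsys hdV2).trans ?_
      funext u
      match_scalars
      · linear_combination (-(4*π^2*r^2*Real.sin (2*π*u))) * hsq
      · ring
      · ring
    have hdU2 : deriv (fun u : ℝ => ((-(4*π^2*r^4)) * Real.sin (2*π*u)) • w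
          + ((-(4*π^2*r^3*Real.sqrt (1 + r ^ 2))) * (Real.sin (2*π*u) * Real.cos (2*π*u))) • v₁
          + ((-(4*π^2*r^3*Real.sqrt (1 + r ^ 2))) * Real.sin (2*π*u)^2) • v₀)
        = fun u => (((-(4*π^2*r^4))*(2*π)) * Real.cos (2*π*u)) • w
            + (((-(4*π^2*r^3*Real.sqrt (1 + r ^ 2)))*(2*π))
                * (Real.cos (2*π*u)^2 - Real.sin (2*π*u)^2)) • v₁
            + (((-(4*π^2*r^3*Real.sqrt (1 + r ^ 2)))*(2*π))
                * (2*(Real.sin (2*π*u) * Real.cos (2*π*u)))) • v₀ :=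
      deriv_cmb (fun u => hdksin (-(4*π^2*r^4)) u)
        (fun u => hdksc (-(4*π^2*r^3*Real.sqrt (1 + r ^ 2))) u)
        (fun u => hdks2 (-(4*π^2*r^3*Real.sqrt (1 + r ^ 2))) u)
    have hc4 : covDt α (fun u => ((-(4*π^2*r^4)) * Real.sin (2*π*u)) • w
          + ((-(4*π^2*r^3*Real.sqrt (1 + r ^ 2))) * (Real.sin (2*π*u) * Real.cos (2*π*u))) • v₁
          + ((-(4*π^2*r^3*Real.sqrt (1 + r ^ 2))) * Real.sin (2*π*u)^2) • v₀)
        = fun u => (((-(4*π^2*r^4))*(2*π)) * Real.cos (2*π*u)) • w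
            + (((-(4*π^2*r^3*Real.sqrt (1 + r ^ 2)))*(2*π))
                * (Real.cos (2*π*u)^2 - Real.sin (2*π*u)^2)) • v₁
            + (((-(4*π^2*r^3*Real.sqrt (1 + r ^ 2)))*(2*π))
                * (2*(Real.sin (2*π*u) * Real.cos (2*π*u)))) • v₀ := by
      simp only [α]
      refine (covDt_cmb hsys hdU2).trans ?_
      funext u
      match_scalars
      · linear_combination (-(8*π^3*r^4*Real.sqrt (1 + r ^ 2)^2*Real.cos (2*π*u))) * hP (2*π*u)
      · linear_combination
          (-(8*π^3*r^5*Real.sqrt (1 + r ^ 2)*Real.cos (2*π*u)^2)) * hP (2*π*u)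
      · linear_combination
          (-(8*π^3*r^5*Real.sqrt (1 + r ^ 2)*Real.sin (2*π*u)*Real.cos (2*π*u))) * hP (2*π*u)
    simp only [hV2, hc3, hc4, W₂, α, hdA]
    rw [mcross_cmb hsys]
    match_scalars
    · linear_combination ((1 - 4*π^2*r^2)*(2*π*r^2)*Real.cos (2*π*t)) * hP (2*π*t)
    · linear_combination (2*π*r*Real.sqrt (1 + r ^ 2)) * hP (2*π*t)
    · ring
  · have hV3 : (fun s : ℝ => (-(2 * Real.pi * r)) • W₃ s)
        = fun u => ((-(2*π*r^2)) * Real.sin (2*π*u)) • w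
            + (0:ℝ) • v₁ + (-(2*π*r*Real.sqrt (1 + r ^ 2))) • v₀ := by
      funext u; simp only [W₃]; module
    have hdV3 : deriv (fun u : ℝ => ((-(2*π*r^2)) * Real.sin (2*π*u)) • w
          + (0:ℝ) • v₁ + (-(2*π*r*Real.sqrt (1 + r ^ 2))) • v₀)
        = fun u => (((-(2*π*r^2))*(2*π)) * Real.cos (2*π*u)) • w
            + (0:ℝ) • v₁ + (0:ℝ) • v₀ :=
      deriv_cmb (fun u => hdksin (-(2*π*r^2)) u) (fun u => hasDerivAt_const u _)
        (fun u => hasDerivAt_const u _)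
    have hc5 : covDt α (fun u => ((-(2*π*r^2)) * Real.sin (2*π*u)) • w
          + (0:ℝ) • v₁ + (-(2*π*r*Real.sqrt (1 + r ^ 2))) • v₀)
        = fun u => ((4*π^2*r^4) * Real.cos (2*π*u)) • w
            + ((4*π^2*r^3*Real.sqrt (1 + r ^ 2)) * Real.cos (2*π*u)^2) • v₁
            + ((4*π^2*r^3*Real.sqrt (1 + r ^ 2)) * (Real.sin (2*π*u) * Real.cos (2*π*u))) • v₀ := by
      simp only [α]
      refine (covDt_cmb hsys hdV3).trans ?_
      funext u
      match_scalars
      · linear_combination (4*π^2*r^2*Real.cos (2*π*u)) * hsq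
      · ring
      · ring
    have hdU3 : deriv (fun u : ℝ => ((4*π^2*r^4) * Real.cos (2*π*u)) • w
          + ((4*π^2*r^3*Real.sqrt (1 + r ^ 2)) * Real.cos (2*π*u)^2) • v₁
          + ((4*π^2*r^3*Real.sqrt (1 + r ^ 2)) * (Real.sin (2*π*u) * Real.cos (2*π*u))) • v₀)
        = fun u => ((-((4*π^2*r^4)*(2*π))) * Real.sin (2*π*u)) • w
            + ((-((4*π^2*r^3*Real.sqrt (1 + r ^ 2))*(2*π)))
                * (2*(Real.sin (2*π*u) * Real.cos (2*π*u)))) • v₁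
            + (((4*π^2*r^3*Real.sqrt (1 + r ^ 2))*(2*π))
                * (Real.cos (2*π*u)^2 - Real.sin (2*π*u)^2)) • v₀ :=
      deriv_cmb (fun u => hdkcos (4*π^2*r^4) u)
        (fun u => hdkc2 (4*π^2*r^3*Real.sqrt (1 + r ^ 2)) u)
        (fun u => hdksc (4*π^2*r^3*Real.sqrt (1 + r ^ 2)) u)
    have hc6 : covDt α (fun u => ((4*π^2*r^4) * Real.cos (2*π*u)) • w
          + ((4*π^2*r^3*Real.sqrt (1 + r ^ 2)) * Real.cos (2*π*u)^2) • v₁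
          + ((4*π^2*r^3*Real.sqrt (1 + r ^ 2)) * (Real.sin (2*π*u) * Real.cos (2*π*u))) • v₀)
        = fun u => ((-((4*π^2*r^4)*(2*π))) * Real.sin (2*π*u)) • w
            + ((-((4*π^2*r^3*Real.sqrt (1 + r ^ 2))*(2*π)))
                * (2*(Real.sin (2*π*u) * Real.cos (2*π*u)))) • v₁
            + (((4*π^2*r^3*Real.sqrt (1 + r ^ 2))*(2*π))
                * (Real.cos (2*π*u)^2 - Real.sin (2*π*u)^2)) • v₀ := by
      simp only [α]
      refine (covDt_cmb hsys hdU3).trans ?_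
      funext u
      match_scalars
      · linear_combination (-(8*π^3*r^4*Real.sqrt (1 + r ^ 2)^2*Real.sin (2*π*u))) * hP (2*π*u)
      · linear_combination
          (-(8*π^3*r^5*Real.sqrt (1 + r ^ 2)*Real.sin (2*π*u)*Real.cos (2*π*u))) * hP (2*π*u)
      · linear_combination
          (-(8*π^3*r^5*Real.sqrt (1 + r ^ 2)*Real.sin (2*π*u)^2)) * hP (2*π*u)
    simp only [hV3, hc5, hc6, W₃, α, hdA]
    rw [mcross_cmb hsys]
    match_scalars
    · linear_combination ((1 - 4*π^2*r^2)*(2*π*r^2)*Real.sin (2*π*t)) * hP (2*π*t)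
    · ring
    · linear_combination (2*π*r*Real.sqrt (1 + r ^ 2)) * hP (2*π*t)
end
end

section
/- Let 0 < r ≤ 1, and let ν₁, ν₂ : ℝ → ℝ be C¹, 1-periodic functions such that ν₂ satisfies ∫₀¹ ν₂(t) dt = 0, ∫₀¹ ν₂(t) cos(2πt) dt = 0, and ∫₀¹ ν₂(t) sin(2πt) dt = 0. Then ∫₀¹ (ν₁'(t)² − 2π√(1+r²) ν₁'(t) ν₂(t) + ν₂'(t)² − 4π² ν₂(t)²) dt ≥ ∫₀¹ ((3/4) ν₁'(t)² + 4π² ν₂(t)²) dt. -/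
noncomputable section
open Real MeasureTheory intervalIntegral
open scoped ENNReal
instance fact_zero_lt_one_real : Fact ((0:ℝ) < 1) := ⟨zero_lt_one⟩

lemma parseval_aux (g : ℝ → ℂ) (hg : Continuous g) (hper : g 0 = g 1) :
    Summable (fun n : ℤ => ‖fourierCoeffOn zero_lt_one g n‖^2) ∧
    ∑' n : ℤ, ‖fourierCoeffOn zero_lt_one g n‖^2 = ∫ t in (0:ℝ)..1, ‖g t‖^2 := by
  have hper' : g 0 = g (0 + 1) := by rw [zero_add]; exact hper
  set G : C(AddCircle (1:ℝ), ℂ) :=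
    ⟨AddCircle.liftIco 1 0 g, AddCircle.liftIco_continuous hper' hg.continuousOn⟩ with hG
  set F := ContinuousMap.toLp (E := ℂ) 2 AddCircle.haarAddCircle ℂ G with hF
  have hc : ∀ n : ℤ, fourierCoeff (F : Lp ℂ 2 _) n = fourierCoeffOn zero_lt_one g n := by
    intro n
    rw [fourierCoeff_toLp]
    have h1 : fourierCoeff (G : AddCircle (1:ℝ) → ℂ) n
        = fourierCoeff (AddCircle.liftIco 1 0 g) n := rfl
    rw [h1, fourierCoeff_liftIco_eq]
    congr 1
    norm_num
  constructor
  · have hm := lp.memℓp (fourierBasis.repr F)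
    have hs := hm.summable (p := 2) (by norm_num)
    have : ∀ i : ℤ, ‖fourierBasis.repr F i‖ ^ (2:ℝ≥0∞).toReal
        = ‖fourierCoeffOn zero_lt_one g i‖ ^ 2 := by
      intro i
      rw [fourierBasis_repr, hc i]
      rw [show ((2:ℝ≥0∞).toReal) = ((2:ℕ):ℝ) by norm_num, Real.rpow_natCast]
    simpa only [this] using hs
  · have hp := tsum_sq_fourierCoeff F
    simp_rw [hc] at hp
    rw [hp]
    -- ∫ ‖F t‖² ∂haar = ∫₀¹ ‖g t‖²
    have hFG : (F : AddCircle (1:ℝ) → ℂ) =ᵐ[AddCircle.haarAddCircle] G :=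
      ContinuousMap.coeFn_toLp _ _
    rw [integral_congr_ae (hFG.mono (fun x hx => by rw [hx]))]
    have hvol : (volume : Measure (AddCircle (1:ℝ)))
        = AddCircle.haarAddCircle := by
      rw [AddCircle.volume_eq_smul_haarAddCircle]
      simp
    rw [← hvol, ← AddCircle.integral_preimage (1:ℝ) 0 (fun x => ‖G x‖^2)]
    rw [intervalIntegral.integral_of_le (by norm_num : (0:ℝ) ≤ 1)]
    rw [show (0:ℝ) + 1 = 1 by norm_num]
    rw [integral_Ioc_eq_integral_Ioo, integral_Ioc_eq_integral_Ioo]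
    refine setIntegral_congr_fun measurableSet_Ioo (fun x hx => ?_)
    have : G (x : AddCircle (1:ℝ)) = g x := by
      show AddCircle.liftIco 1 0 g _ = g x
      exact AddCircle.liftIco_coe_apply (by simpa using ⟨hx.1.le, hx.2⟩)
    rw [this]

lemma fc_eq (f : ℝ → ℂ) (n : ℤ) :
    fourierCoeffOn zero_lt_one f n
      = ∫ t in (0:ℝ)..1, Complex.exp (2 * π * Complex.I * (-n) * t) * f t := by
  rw [fourierCoeffOn_eq_integral]
  norm_num [fourier_coe_apply, smul_eq_mul]
  refine intervalIntegral.integral_congr (fun x _ => ?_)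
  rw [← Complex.exp_conj]
  congr 1
  simp only [map_mul, Complex.conj_I, Complex.conj_ofReal, map_ofNat, map_intCast]
  ring

lemma integral_complex_split (a b : ℝ → ℝ)
    (ha : Continuous a) (hb : Continuous b) (w : ℂ) :
    ∫ t in (0:ℝ)..1, ((a t : ℂ) + (b t : ℂ) * w)
      = ↑(∫ t in (0:ℝ)..1, a t) + ↑(∫ t in (0:ℝ)..1, b t) * w := by
  have ha' : Continuous fun t => (a t : ℂ) := Complex.continuous_ofReal.comp ha
  have hb' : Continuous fun t => (b t : ℂ) * w := (Complex.continuous_ofReal.comp hb).mul continuous_const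
  rw [intervalIntegral.integral_add (ha'.intervalIntegrable _ _) (hb'.intervalIntegrable _ _),
    intervalIntegral.integral_mul_const, intervalIntegral.integral_ofReal,
    intervalIntegral.integral_ofReal]

lemma wirtinger2 (ν₂ : ℝ → ℝ) (h₂ : ContDiff ℝ 1 ν₂)
    (hper₂ : ∀ t : ℝ, ν₂ (t + 1) = ν₂ t)
    (h0 : ∫ t in (0:ℝ)..1, ν₂ t = 0)
    (hcos : ∫ t in (0:ℝ)..1, ν₂ t * Real.cos (2 * Real.pi * t) = 0)
    (hsin : ∫ t in (0:ℝ)..1, ν₂ t * Real.sin (2 * Real.pi * t) = 0) :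
    16 * Real.pi ^ 2 * ∫ t in (0:ℝ)..1, (ν₂ t) ^ 2
      ≤ ∫ t in (0:ℝ)..1, (deriv ν₂ t) ^ 2 := by
  have hν₂c : Continuous ν₂ := h₂.continuous
  have hdc : Continuous (deriv ν₂) := h₂.continuous_deriv le_rfl
  have hdiff : Differentiable ℝ ν₂ := h₂.differentiable one_ne_zero
  have hdper : ∀ t : ℝ, deriv ν₂ (t + 1) = deriv ν₂ t := by
    intro t
    have : deriv (fun s => ν₂ (s + 1)) t = deriv ν₂ (t + 1) := by
      rw [deriv_comp_add_const]
    rw [← this]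
    congr 1
    ext s; exact hper₂ s
  set g : ℝ → ℂ := fun t => (ν₂ t : ℂ) with hgdef
  set g' : ℝ → ℂ := fun t => ((deriv ν₂ t : ℝ) : ℂ) with hg'def
  have hgc : Continuous g := Complex.continuous_ofReal.comp hν₂c
  have hg'c : Continuous g' := Complex.continuous_ofReal.comp hdc
  have hgper : g 0 = g 1 := by simp only [hgdef]; norm_cast; simpa using (hper₂ 0).symm
  have hg'per : g' 0 = g' 1 := by simp only [hg'def]; norm_cast; simpa using (hdper 0).symm
  set c : ℤ → ℂ := fun n => fourierCoeffOn zero_lt_one g n with hcdef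
  set d : ℤ → ℂ := fun n => fourierCoeffOn zero_lt_one g' n with hddef
  have hgderiv : ∀ x : ℝ, HasDerivAt g (g' x) x := fun x =>
    ((hdiff x).hasDerivAt).ofReal_comp
  -- d n = 2 π I n * c n for n ≠ 0
  have hdn : ∀ n : ℤ, n ≠ 0 → d n = 2 * Real.pi * Complex.I * n * c n := by
    intro n hn
    have h := fourierCoeffOn_of_hasDerivAt zero_lt_one hn
      (fun x _ => hgderiv x) (hg'c.intervalIntegrable _ _)
    rw [hgper.symm] at h
    have h2 : c n = 1 / (-2 * Real.pi * Complex.I * n) * (-(1 - 0) * d n) := by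
      simpa [sub_self] using h
    have hne : (2 * Real.pi * Complex.I * n : ℂ) ≠ 0 := by
      simp [Complex.I_ne_zero, Real.pi_ne_zero, hn]
    rw [h2]
    field_simp
    ring
  -- d 0 = 0
  have hd0 : d 0 = 0 := by
    rw [hddef]
    simp only [fc_eq]
    simp only [Int.cast_zero, neg_zero, mul_zero, zero_mul, Complex.exp_zero, one_mul]
    have : ∫ t in (0:ℝ)..1, g' t = ((∫ t in (0:ℝ)..1, deriv ν₂ t : ℝ) : ℂ) :=
      (intervalIntegral.integral_ofReal).symm ▸ rfl
    rw [intervalIntegral.integral_ofReal]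
    have hsub : (∫ t in (0:ℝ)..1, deriv ν₂ t) = ν₂ 1 - ν₂ 0 :=
      intervalIntegral.integral_deriv_eq_sub (fun x _ => hdiff x)
        (hdc.intervalIntegrable _ _)
    rw [hsub]
    have h10 := hper₂ 0
    rw [zero_add] at h10
    rw [h10, sub_self, Complex.ofReal_zero]
  -- c 0 = 0
  have hc0 : c 0 = 0 := by
    rw [hcdef]
    simp only [fc_eq]
    simp only [Int.cast_zero, neg_zero, mul_zero, zero_mul, Complex.exp_zero, one_mul]
    rw [intervalIntegral.integral_ofReal, h0]
    norm_num
  -- c 1 = 0 and c (-1) = 0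
  have hc1 : c 1 = 0 := by
    rw [hcdef]; simp only [fc_eq]
    have : ∀ t : ℝ, Complex.exp (2 * Real.pi * Complex.I * (-(1:ℤ)) * t) * g t
        = ((ν₂ t * Real.cos (2 * Real.pi * t) : ℝ) : ℂ)
          + ((ν₂ t * Real.sin (2 * Real.pi * t) : ℝ) : ℂ) * (-Complex.I) := by
      intro t
      have h1 : (2 * Real.pi * Complex.I * (-(1:ℤ)) * t : ℂ)
          = ((-(2 * Real.pi * t) : ℝ) : ℂ) * Complex.I := by push_cast; ring
      rw [h1, Complex.exp_mul_I, ← Complex.ofReal_cos, ← Complex.ofReal_sin,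
        Real.cos_neg, Real.sin_neg]
      push_cast
      ring
    rw [intervalIntegral.integral_congr (fun t _ => this t),
      integral_complex_split (fun t => ν₂ t * Real.cos (2 * Real.pi * t))
        (fun t => ν₂ t * Real.sin (2 * Real.pi * t)) (hν₂c.mul (by fun_prop)) (hν₂c.mul (by fun_prop)) _,
      hcos, hsin]
    norm_num
  have hcm1 : c (-1) = 0 := by
    rw [hcdef]; simp only [fc_eq]
    have : ∀ t : ℝ, Complex.exp (2 * Real.pi * Complex.I * (-(-1:ℤ)) * t) * g t
        = ((ν₂ t * Real.cos (2 * Real.pi * t) : ℝ) : ℂ)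
          + ((ν₂ t * Real.sin (2 * Real.pi * t) : ℝ) : ℂ) * Complex.I := by
      intro t
      have h1 : (2 * Real.pi * Complex.I * (-(-1:ℤ)) * t : ℂ)
          = ((2 * Real.pi * t : ℝ) : ℂ) * Complex.I := by push_cast; ring
      rw [h1, Complex.exp_mul_I, ← Complex.ofReal_cos, ← Complex.ofReal_sin]
      push_cast
      ring
    rw [intervalIntegral.integral_congr (fun t _ => this t),
      integral_complex_split (fun t => ν₂ t * Real.cos (2 * Real.pi * t))
        (fun t => ν₂ t * Real.sin (2 * Real.pi * t)) (hν₂c.mul (by fun_prop)) (hν₂c.mul (by fun_prop)) _,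
      hcos, hsin]
    norm_num
  -- termwise inequality
  have hterm : ∀ n : ℤ, 16 * Real.pi ^ 2 * ‖c n‖ ^ 2 ≤ ‖d n‖ ^ 2 := by
    intro n
    rcases eq_or_ne n 0 with rfl | hn
    · rw [hc0, hd0]; norm_num
    rcases eq_or_ne n 1 with rfl | hn1
    · rw [hc1, hdn 1 hn, hc1]; norm_num
    rcases eq_or_ne n (-1) with rfl | hnm1
    · rw [hcm1, hdn (-1) hn, hcm1]; norm_num
    · have hn2 : (2:ℝ) ≤ |(n:ℝ)| := by
        have hna : 2 ≤ n.natAbs := by omega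
        rw [← Int.cast_abs, Int.abs_eq_natAbs]
        exact_mod_cast hna
      rw [hdn n hn]
      rw [norm_mul, mul_pow]
      have hnorm : ‖(2 * Real.pi * Complex.I * n : ℂ)‖ = 2 * Real.pi * |(n:ℝ)| := by
        simp [norm_mul, abs_of_pos Real.pi_pos]
      rw [hnorm]
      have h4 : 16 * Real.pi ^ 2 ≤ (2 * Real.pi * |(n:ℝ)|) ^ 2 := by
        have : (2 * Real.pi * |(n:ℝ)|) ^ 2 = 4 * Real.pi^2 * |(n:ℝ)|^2 := by ring
        rw [this]
        nlinarith [Real.pi_pos, sq_nonneg (|(n:ℝ)| - 2)]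
      nlinarith [sq_nonneg ‖c n‖, norm_nonneg (c n)]
  -- Parseval both sides
  obtain ⟨hsumg, hparg⟩ := parseval_aux g hgc hgper
  obtain ⟨hsumg', hparg'⟩ := parseval_aux g' hg'c hg'per
  have hng : ∀ t : ℝ, ‖g t‖ ^ 2 = (ν₂ t) ^ 2 := fun t => by
    simp [hgdef, Complex.norm_real, sq_abs]
  have hng' : ∀ t : ℝ, ‖g' t‖ ^ 2 = (deriv ν₂ t) ^ 2 := fun t => by
    simp [hg'def, Complex.norm_real, sq_abs]
  have e1 : ∑' n : ℤ, ‖c n‖ ^ 2 = ∫ t in (0:ℝ)..1, (ν₂ t) ^ 2 := by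
    simp only [hcdef]
    rw [hparg]
    exact intervalIntegral.integral_congr (fun t _ => hng t)
  have e2 : ∑' n : ℤ, ‖d n‖ ^ 2 = ∫ t in (0:ℝ)..1, (deriv ν₂ t) ^ 2 := by
    simp only [hddef]
    rw [hparg']
    exact intervalIntegral.integral_congr (fun t _ => hng' t)
  rw [← e1, ← e2, ← tsum_mul_left]
  exact Summable.tsum_le_tsum hterm (hsumg.mul_left _) hsumg'

/-- the coercivity estimate for the quadratic form
∫ ν₁'² − 2π√(1+r²) ν₁'ν₂ + ν₂'² − 4π²ν₂² on the orthogonal complement of the first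
Fourier modes (in ν₂), for 0 < r ≤ 1. -/
theorem stmt_17 (r : ℝ) (hr0 : 0 < r) (hr1 : r ≤ 1) (ν₁ ν₂ : ℝ → ℝ)
    (h₁ : ContDiff ℝ 1 ν₁) (h₂ : ContDiff ℝ 1 ν₂)
    (hper₁ : ∀ t : ℝ, ν₁ (t + 1) = ν₁ t) (hper₂ : ∀ t : ℝ, ν₂ (t + 1) = ν₂ t)
    (h0 : ∫ t in (0:ℝ)..1, ν₂ t = 0)
    (hcos : ∫ t in (0:ℝ)..1, ν₂ t * Real.cos (2 * Real.pi * t) = 0)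
    (hsin : ∫ t in (0:ℝ)..1, ν₂ t * Real.sin (2 * Real.pi * t) = 0) :
    (∫ t in (0:ℝ)..1,
        ((deriv ν₁ t) ^ 2 - 2 * Real.pi * Real.sqrt (1 + r ^ 2) * deriv ν₁ t * ν₂ t +
          (deriv ν₂ t) ^ 2 - 4 * Real.pi ^ 2 * (ν₂ t) ^ 2)) ≥
      ∫ t in (0:ℝ)..1, ((3 / 4) * (deriv ν₁ t) ^ 2 + 4 * Real.pi ^ 2 * (ν₂ t) ^ 2) := by
  set a : ℝ := 2 * Real.pi * Real.sqrt (1 + r ^ 2) with hadef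
  have hD1 : Continuous (deriv ν₁) := h₁.continuous_deriv le_rfl
  have hD2 : Continuous (deriv ν₂) := h₂.continuous_deriv le_rfl
  have hν₂c : Continuous ν₂ := h₂.continuous
  have ha2 : a ^ 2 = 4 * Real.pi ^ 2 * (1 + r ^ 2) := by
    rw [hadef, mul_pow, mul_pow, Real.sq_sqrt (by positivity)]
    ring
  have ha2le : a ^ 2 ≤ 8 * Real.pi ^ 2 := by
    rw [ha2]
    have hr2 : r ^ 2 ≤ 1 := by nlinarith
    have h48 : 4 * Real.pi ^ 2 * (1 + r ^ 2) ≤ 4 * Real.pi ^ 2 * (1 + 1) := by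
      gcongr
    linarith
  have hw := wirtinger2 ν₂ h₂ hper₂ h0 hcos hsin
  have hI2 : 0 ≤ ∫ t in (0:ℝ)..1, (ν₂ t) ^ 2 :=
    intervalIntegral.integral_nonneg (by norm_num) (fun t _ => sq_nonneg _)
  have hsq : 0 ≤ ∫ t in (0:ℝ)..1, (deriv ν₁ t / 2 - a * ν₂ t) ^ 2 :=
    intervalIntegral.integral_nonneg (by norm_num) (fun t _ => sq_nonneg _)
  -- continuity of pieces
  have cRHS : Continuous fun t => (3 / 4) * (deriv ν₁ t) ^ 2 + 4 * Real.pi ^ 2 * (ν₂ t) ^ 2 :=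
    ((continuous_const.mul (hD1.pow 2)).add (continuous_const.mul (hν₂c.pow 2)))
  have csq : Continuous fun t => (deriv ν₁ t / 2 - a * ν₂ t) ^ 2 :=
    ((hD1.div_const 2).sub (continuous_const.mul hν₂c)).pow 2
  have crest : Continuous fun t =>
      (deriv ν₂ t) ^ 2 - (8 * Real.pi ^ 2 + a ^ 2) * (ν₂ t) ^ 2 :=
    (hD2.pow 2).sub (continuous_const.mul (hν₂c.pow 2))
  have eq1 : (∫ t in (0:ℝ)..1,
        ((deriv ν₁ t) ^ 2 - 2 * Real.pi * Real.sqrt (1 + r ^ 2) * deriv ν₁ t * ν₂ t +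
          (deriv ν₂ t) ^ 2 - 4 * Real.pi ^ 2 * (ν₂ t) ^ 2))
      = (∫ t in (0:ℝ)..1, ((3 / 4) * (deriv ν₁ t) ^ 2 + 4 * Real.pi ^ 2 * (ν₂ t) ^ 2))
        + ((∫ t in (0:ℝ)..1, (deriv ν₁ t / 2 - a * ν₂ t) ^ 2)
          + ((∫ t in (0:ℝ)..1, (deriv ν₂ t) ^ 2)
            - (8 * Real.pi ^ 2 + a ^ 2) * ∫ t in (0:ℝ)..1, (ν₂ t) ^ 2)) := by
    rw [← intervalIntegral.integral_const_mul,
      ← intervalIntegral.integral_sub (f := fun t => (deriv ν₂ t) ^ 2)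
        (g := fun t => (8 * Real.pi ^ 2 + a ^ 2) * (ν₂ t) ^ 2) ((hD2.pow 2).intervalIntegrable _ _)
        ((continuous_const.mul (hν₂c.pow 2)).intervalIntegrable _ _),
      ← intervalIntegral.integral_add (csq.intervalIntegrable _ _)
        (crest.intervalIntegrable _ _),
      ← intervalIntegral.integral_add (g := fun t => (deriv ν₁ t / 2 - a * ν₂ t) ^ 2
          + ((deriv ν₂ t) ^ 2 - (8 * Real.pi ^ 2 + a ^ 2) * (ν₂ t) ^ 2)) (cRHS.intervalIntegrable _ _)
        ((csq.add crest).intervalIntegrable _ _)]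
    refine intervalIntegral.integral_congr (fun t _ => ?_)
    simp only [← hadef]
    ring
  rw [ge_iff_le, eq1]
  nlinarith [hw, hI2, hsq, ha2le]
end
end

section
/- Let r > 0 and x, y ∈ ℝ. Define f₁(t) = x cos(2πt) + y sin(2πt) and f₂(t) = (8π²√(1+r²)/(4π²(2+r²)+1)) (y cos(2πt) − x sin(2πt)). Then ∫₀¹ (f₁'(t)² − 2π√(1+r²) f₁'(t) f₂(t)) dt = (2π²(1 − 4π²r²)/(4π²(2+r²)+1)) (x² + y²). -/
noncomputable section

open Real


lemma aux_int (a b c : ℝ) :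
    (∫ t in (0:ℝ)..1, (a * Real.sin (2*Real.pi*t)^2 + b * Real.cos (2*Real.pi*t)^2
        + c * (Real.sin (2*Real.pi*t) * Real.cos (2*Real.pi*t)))) = (a+b)/2 := by
  have h2pi : (2:ℝ)*Real.pi ≠ 0 := by positivity
  have key := intervalIntegral.mul_integral_comp_mul_left
    (f := fun u => a * Real.sin u^2 + b * Real.cos u^2 + c * (Real.sin u * Real.cos u))
    (a := 0) (b := 1) (c := 2*Real.pi)
  rw [mul_zero, mul_one] at key
  have hrhs : (∫ u in (0:ℝ)..(2*Real.pi), (a * Real.sin u^2 + b * Real.cos u^2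
      + c * (Real.sin u * Real.cos u))) = (a+b) * Real.pi := by
    rw [intervalIntegral.integral_add, intervalIntegral.integral_add,
      intervalIntegral.integral_const_mul, intervalIntegral.integral_const_mul,
      intervalIntegral.integral_const_mul, integral_sin_sq, integral_cos_sq,
      integral_sin_mul_cos₁]
    · simp [Real.sin_two_pi, Real.cos_two_pi]; ring
    · exact (continuous_const.mul (continuous_sin.pow 2)).intervalIntegrable _ _
    · exact (continuous_const.mul (continuous_cos.pow 2)).intervalIntegrable _ _
    · exact ((continuous_const.mul (continuous_sin.pow 2)).add (continuous_const.mul (continuous_cos.pow 2))).intervalIntegrable _ _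
    · exact (continuous_const.mul (continuous_sin.mul continuous_cos)).intervalIntegrable _ _
  rw [hrhs] at key
  rw [show (a+b)/2 = ((a+b)*Real.pi)/(2*Real.pi) by field_simp, ← key,
    eq_div_iff h2pi]
  ring

/-- the explicit value of ∫₀¹ (f₁'² − 2π√(1+r²) f₁' f₂) for the first
Fourier mode pair f₁, f₂. -/
theorem stmt_18 (r x y : ℝ) (hr : 0 < r) :
    let f₁ : ℝ → ℝ := fun t => x * Real.cos (2 * Real.pi * t) + y * Real.sin (2 * Real.pi * t)
    let f₂ : ℝ → ℝ := fun t =>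
      8 * Real.pi ^ 2 * Real.sqrt (1 + r ^ 2) / (4 * Real.pi ^ 2 * (2 + r ^ 2) + 1) *
        (y * Real.cos (2 * Real.pi * t) - x * Real.sin (2 * Real.pi * t))
    (∫ t in (0:ℝ)..1,
        ((deriv f₁ t) ^ 2 - 2 * Real.pi * Real.sqrt (1 + r ^ 2) * deriv f₁ t * f₂ t)) =
      2 * Real.pi ^ 2 * (1 - 4 * Real.pi ^ 2 * r ^ 2) / (4 * Real.pi ^ 2 * (2 + r ^ 2) + 1) *
        (x ^ 2 + y ^ 2) := by
  intro f₁ f₂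
  have hQ : 4 * Real.pi ^ 2 * (2 + r ^ 2) + 1 ≠ 0 := by positivity
  have hS : Real.sqrt (1 + r ^ 2) ^ 2 = 1 + r ^ 2 := Real.sq_sqrt (by positivity)
  set Q : ℝ := 4 * Real.pi ^ 2 * (2 + r ^ 2) + 1 with hQdef
  set k : ℝ := 4 * Real.pi ^ 2 - 32 * Real.pi ^ 4 * (1 + r ^ 2) / Q with hk
  have hder : deriv f₁ = fun t =>
      2 * Real.pi * y * Real.cos (2 * Real.pi * t) - 2 * Real.pi * x * Real.sin (2 * Real.pi * t) := by
    funext t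
    have hc : HasDerivAt (fun t : ℝ => 2 * Real.pi * t) (2 * Real.pi) t := by
      simpa using (hasDerivAt_id t).const_mul (2 * Real.pi)
    have h1 := (((Real.hasDerivAt_cos (2 * Real.pi * t)).comp t hc).const_mul x).add
      (((Real.hasDerivAt_sin (2 * Real.pi * t)).comp t hc).const_mul y)
    have h2 : HasDerivAt f₁
        (2 * Real.pi * y * Real.cos (2 * Real.pi * t)
          - 2 * Real.pi * x * Real.sin (2 * Real.pi * t)) t := by
      exact h1.congr_deriv (by ring)
    exact h2.deriv
  have hpt : ∀ t : ℝ, (deriv f₁ t) ^ 2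
      - 2 * Real.pi * Real.sqrt (1 + r ^ 2) * deriv f₁ t * f₂ t
      = (x ^ 2 * k) * Real.sin (2 * Real.pi * t) ^ 2
        + (y ^ 2 * k) * Real.cos (2 * Real.pi * t) ^ 2
        + (-(2 * x * y * k)) * (Real.sin (2 * Real.pi * t) * Real.cos (2 * Real.pi * t)) := by
    intro t
    simp only [hder, f₂, hk]
    set s := Real.sin (2 * Real.pi * t)
    set co := Real.cos (2 * Real.pi * t)
    field_simp
    linear_combination (-32 * Real.pi ^ 2 * (y * co - x * s) ^ 2 * Q) * hS + (-32 * Real.pi ^ 2 * (1 + r ^ 2) * (y * co - x * s) ^ 2) * hQdef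
  rw [intervalIntegral.integral_congr (g := fun t =>
      (x ^ 2 * k) * Real.sin (2 * Real.pi * t) ^ 2
        + (y ^ 2 * k) * Real.cos (2 * Real.pi * t) ^ 2
        + (-(2 * x * y * k)) * (Real.sin (2 * Real.pi * t) * Real.cos (2 * Real.pi * t)))
      (fun t _ => hpt t), aux_int, hk]
  field_simp
  ring
end
end

section
/- Let K₀ > 0 and let k, A, L be real numbers with k > √K₀, A ≥ 0, and L ≥ 0. If 2π ≥ −K₀ A + k L and L² ≥ 4π A + K₀ A², then L ≤ 2π/(k − √K₀). -/
open Real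

/-- the arithmetic core of the a priori length estimate: combining the
Gauss–Bonnet inequality 2π ≥ −K₀A + kL with the isoperimetric inequality
L² ≥ 4πA + K₀A² yields L ≤ 2π/(k − √K₀). -/
theorem stmt_19 (K₀ k A L : ℝ) (hK₀ : 0 < K₀) (hk : Real.sqrt K₀ < k)
    (hA : 0 ≤ A) (hL : 0 ≤ L)
    (hGB : 2 * Real.pi ≥ -K₀ * A + k * L)
    (hiso : L ^ 2 ≥ 4 * Real.pi * A + K₀ * A ^ 2) :
    L ≤ 2 * Real.pi / (k - Real.sqrt K₀) := by
  set s := Real.sqrt K₀ with hs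
  have hs0 : 0 ≤ s := Real.sqrt_nonneg _
  have hsq : s ^ 2 = K₀ := Real.sq_sqrt hK₀.le
  have hsAL : s * A ≤ L := by
    nlinarith [mul_nonneg hs0 hA, mul_nonneg Real.pi_pos.le hA,
      sq_nonneg (L - s * A), sq_nonneg (L + s * A)]
  rw [le_div_iff₀ (by linarith)]
  nlinarith [mul_nonneg hs0 (sub_nonneg.2 hsAL)]
end
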